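/- For all p ∈ (0,1), the average share of girls under the Beit Shammai rule is strictly below the girls' birth probability: ḡ_S(p) = 1 − 2 (p/(1-p)) (1 + (p/(1-p)) ln p) < 1 − p. -/

import Mathlib

lemma key (p : ℝ) (h0 : 0 < p) (h1 : p < 1) : 2 * p * Real.log p > p ^ 2 - 1 := by
  have hf : ∀ x ∈ Set.Ioi (0:ℝ), HasDerivAt (fun x => 2 * Real.log x - x + x⁻¹)
      (2 / x - 1 - 1 / x ^ 2) x := by
    intro x hx
    have hx0 : x ≠ 0 := ne_of_gt hx
    have := (((Real.hasDerivAt_log hx0).const_mul 2).sub (hasDerivAt_id x)).add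
      (hasDerivAt_inv hx0)
    convert this using 1
    · rfl
    · rfl
    · rfl
    · ring
  have hanti : StrictAntiOn (fun x => 2 * Real.log x - x + x⁻¹) (Set.Ioc (0:ℝ) 1) := by
    apply strictAntiOn_of_deriv_neg (convex_Ioc 0 1)
    · exact fun x hx => (hf x hx.1).continuousAt.continuousWithinAt
    · intro x hx
      rw [interior_Ioc] at hx
      rw [(hf x hx.1).deriv]
      have hx0 := hx.1
      have hx1 := hx.2
      have h : 2 / x - 1 - 1 / x ^ 2 = -((x - 1) ^ 2 / x ^ 2) := by field_simp; ring
      rw [h]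
      have hpos : (x - 1) ^ 2 / x ^ 2 > 0 := div_pos (by nlinarith) (by positivity)
      linarith
  have := hanti (Set.mem_Ioc.2 ⟨h0, le_of_lt h1⟩) (Set.mem_Ioc.2 ⟨one_pos, le_refl 1⟩) h1
  simp only [Real.log_one] at this
  have h2 : 0 < 2 * Real.log p - p + p⁻¹ := by norm_num at this; linarith
  have h3 : 0 < (2 * Real.log p - p + p⁻¹) * p := mul_pos h2 h0
  have hp : p ≠ 0 := ne_of_gt h0
  field_simp at h3
  nlinarith [h3]

theorem beit_shammai_avg_share_lt_birth_probability (p : ℝ) (hp : p ∈ Set.Ioo (0 : ℝ) 1) :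
    1 - 2 * (p / (1 - p)) * (1 + (p / (1 - p)) * Real.log p) < 1 - p := by
  obtain ⟨h0, h1⟩ := hp
  have hq : (0:ℝ) < 1 - p := by linarith
  have hk := key p h0 h1
  rw [sub_lt_sub_iff_left]
  have heq : 2 * (p / (1 - p)) * (1 + p / (1 - p) * Real.log p)
      = (2 * p * (1 - p) + 2 * p ^ 2 * Real.log p) / (1 - p) ^ 2 := by
    field_simp
  rw [heq, lt_div_iff₀ (by positivity)]
  nlinarith [mul_pos h0 (sub_pos.mpr hk)]
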